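/- Let R be a principal ideal domain and S a commutative unital R-algebra that is free of rank 3 as an R-module. Then S admits an R-module basis of the form (1, α₁, α₂) such that the product α₁·α₂ lies in R·1 (the R-span of the identity). Such a basis is called a normal basis. -/

import Mathlib

open Polynomial

/-- If `e` is integral over `R`, the algebra map is injective, and `u • e = 1`,
then `u` is a unit in `R`. -/
private lemma isUnit_of_smul_eq_one {R S : Type*} [CommRing R] [CommRing S] [Algebra R S]
    [Nontrivial S] (hinj : Function.Injective (algebraMap R S)) {e : S}
    (hint : IsIntegral R e) {u : R} (h : u • e = 1) : IsUnit u := by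
  obtain ⟨p, pmon, hp⟩ := hint
  have h2 : Polynomial.aeval (algebraMap R S u * e) (p.scaleRoots u) = 0 :=
    Polynomial.scaleRoots_aeval_eq_zero hp
  rw [← Algebra.smul_def, h] at h2
  rw [Polynomial.aeval_def, Polynomial.eval₂_at_one] at h2
  have h3 : (p.scaleRoots u).eval 1 = 0 := hinj (h2.trans (map_zero _).symm)
  have hn : p.natDegree ≠ 0 := by
    intro h0
    rw [(Polynomial.Monic.natDegree_eq_zero pmon).mp h0] at hp
    simp at hp
  have heval : (p.scaleRoots u).eval 1 =
      (∑ i ∈ Finset.range p.natDegree, p.coeff i * u ^ (p.natDegree - i)) + 1 := by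
    rw [Polynomial.eval_eq_sum_range, Polynomial.natDegree_scaleRoots, Finset.sum_range_succ]
    simp [Polynomial.coeff_scaleRoots, pmon.coeff_natDegree]
  have hdvd : u ∣ 1 := by
    have h4 : (1 : R) = -(∑ i ∈ Finset.range p.natDegree, p.coeff i * u ^ (p.natDegree - i)) := by
      rw [heval] at h3
      linear_combination h3
    rw [h4, dvd_neg]
    refine Finset.dvd_sum fun i hi => ?_
    exact dvd_mul_of_dvd_right
      (dvd_pow_self u (Nat.sub_ne_zero_of_lt (Finset.mem_range.mp hi))) _
  exact isUnit_of_dvd_one hdvd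

/-- Let `R` be a principal ideal domain and `S` a commutative unital `R`-algebra that is
free of rank `3` as an `R`-module (a cubic ring).  Then `S` admits an `R`-module basis
`(1, α₁, α₂)` whose first element is `1` and such that `α₁ * α₂` lies in `R·1`;
such a basis is called a *normal* basis. -/
theorem stmt_2 (R S : Type*) [CommRing R] [IsDomain R] [IsPrincipalIdealRing R]
    [CommRing S] [Algebra R S] [Module.Free R S]
    (hrank : Module.finrank R S = 3) :
    ∃ b : Module.Basis (Fin 3) R S, b 0 = 1 ∧ ∃ c : R, b 1 * b 2 = algebraMap R S c := by
  classical
  have hfin : Module.Finite R S := Module.finite_of_finrank_eq_succ hrank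
  let b0 : Module.Basis (Fin 3) R S := (Module.finBasis R S).reindex (finCongr hrank)
  have hnt : Nontrivial S := nontrivial_of_ne (b0 0) 0 (b0.ne_zero 0)
  have hinj : Function.Injective (algebraMap R S) :=
    FaithfulSMul.algebraMap_injective R S
  -- Smith normal form for the submodule `R·1`.
  set N : Submodule R S := Submodule.span R {(1 : S)} with hN
  obtain ⟨n, snf⟩ := Submodule.smithNormalForm b0 N
  have h1mem : (1 : S) ∈ N := Submodule.mem_span_singleton_self 1
  -- `N` has a basis consisting of the single element `1`, hence `n = 1`.
  have hli : LinearIndependent R (fun _ : Fin 1 => (1 : S)) :=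
    LinearIndependent.of_subsingleton 0 (one_ne_zero)
  have hspan : Submodule.span R (Set.range fun _ : Fin 1 => (1 : S)) = N := by
    rw [hN, Set.range_const]
  let bN1 : Module.Basis (Fin 1) R N := (Module.Basis.span hli).map (LinearEquiv.ofEq _ _ hspan)
  have hn1 : n = 1 := by simpa using Fintype.card_congr (snf.bN.indexEquiv bN1)
  subst hn1
  -- Express `1` in terms of the Smith normal form data.
  have hsum := snf.bN.sum_repr ⟨1, h1mem⟩
  rw [Fin.sum_univ_one] at hsum
  set c : R := snf.bN.repr ⟨1, h1mem⟩ 0 with hc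
  have h1eq : (c * snf.a 0) • snf.bM (snf.f 0) = 1 := by
    have h := congrArg (Subtype.val) hsum
    simp only [SetLike.val_smul] at h
    rwa [snf.snf 0, smul_smul] at h
  have hu : IsUnit (c * snf.a 0) :=
    isUnit_of_smul_eq_one hinj (IsIntegral.of_finite R _) h1eq
  -- Rescale the basis so that one of its vectors is `1`, and move it to position `0`.
  let w : Fin 3 → Rˣ := fun i => if i = snf.f 0 then hu.unit else 1
  let bM' : Module.Basis (Fin 3) R S := snf.bM.unitsSMul w
  have hbM' : bM' (snf.f 0) = 1 := by
    rw [show bM' (snf.f 0) = w (snf.f 0) • snf.bM (snf.f 0) from Module.Basis.unitsSMul_apply _]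
    rw [show w (snf.f 0) = hu.unit from if_pos rfl, Units.smul_def, hu.unit_spec]
    exact h1eq
  let b1 : Module.Basis (Fin 3) R S := bM'.reindex (Equiv.swap (snf.f 0) 0)
  have hb10 : b1 0 = 1 := by
    rw [Module.Basis.reindex_apply, Equiv.symm_swap, Equiv.swap_apply_right]
    exact hbM'
  -- Normalize: subtract suitable multiples of `1` from the last two basis vectors.
  have hrep : b1 1 * b1 2 = b1.repr (b1 1 * b1 2) 0 • b1 0 +
      b1.repr (b1 1 * b1 2) 1 • b1 1 + b1.repr (b1 1 * b1 2) 2 • b1 2 := by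
    have h := b1.sum_repr (b1 1 * b1 2)
    rw [Fin.sum_univ_three] at h
    exact h.symm
  set q0 : R := b1.repr (b1 1 * b1 2) 0 with hq0
  set q1 : R := b1.repr (b1 1 * b1 2) 1 with hq1
  set q2 : R := b1.repr (b1 1 * b1 2) 2 with hq2
  let v : Fin 3 → S := ![b1 0, b1 1 - q2 • b1 0, b1 2 - q1 • b1 0]
  let w2 : Fin 3 → S := ![b1 0, b1 1 + q2 • b1 0, b1 2 + q1 • b1 0]
  let F : S →ₗ[R] S := b1.constr R v
  let G : S →ₗ[R] S := b1.constr R w2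
  have hFG : F.comp G = LinearMap.id := by
    refine b1.ext fun i => ?_
    fin_cases i <;>
      simp [F, G, v, w2, Module.Basis.constr_basis, map_add, map_sub, map_smul]
  have hGF : G.comp F = LinearMap.id := by
    refine b1.ext fun i => ?_
    fin_cases i <;>
      simp [F, G, v, w2, Module.Basis.constr_basis, map_add, map_sub, map_smul]
  let equiv : S ≃ₗ[R] S := LinearEquiv.ofLinear F G hFG hGF
  let b2 : Module.Basis (Fin 3) R S := b1.map equiv
  have hb2 : ∀ i, b2 i = v i := by
    intro i
    show equiv (b1 i) = v i
    show F (b1 i) = v i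
    exact b1.constr_basis R v i
  refine ⟨b2, ?_, q0 + q1 * q2, ?_⟩
  · rw [hb2 0]
    show b1 0 = 1
    exact hb10
  · rw [hb2 1, hb2 2]
    show (b1 1 - q2 • b1 0) * (b1 2 - q1 • b1 0) = algebraMap R S (q0 + q1 * q2)
    rw [hb10] at hrep ⊢
    simp only [Algebra.smul_def, mul_one, map_add, map_mul] at hrep ⊢
    linear_combination hrep
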